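/- arXiv:2206.11985 — 2 statements merged into one kernel-verified Lean document; each statement's English description precedes it below -/
import Mathlib

section
/- Let λ > 0 and let (S₁, δu₁), …, (S_N, δu_N) be independent, identically distributed pairs of real-valued random variables such that almost surely S_i ≥ 0, S_i is integrable, δu_i is independent of S_i, E[δu_i] = 0, and E[(δu_i)²] < ∞. Set ω_i = exp(−S_i/λ), let m = E[ω₁] (so m > 0), let Ê₂ = (1/N)·Σ_{i=1}^{N} ω_i·δu_i / m and E₂ = E[ω₁·δu₁]/m. Then for every ε > 0, ℙ( |Ê₂ − E₂| ≥ ε ) ≤ (4·Var[δu₁]/(N·ε²))·exp( 2·E[S₁]/λ ). -/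
open MeasureTheory ProbabilityTheory

/-- The variance `E[Z²] − (E[Z])²` of a real-valued random variable. -/
noncomputable def rvVar {Ω : Type*} [MeasurableSpace Ω] (μ : Measure Ω) (Z : Ω → ℝ) : ℝ :=
  (∫ x, (Z x) ^ 2 ∂μ) - (∫ x, Z x ∂μ) ^ 2

/-- Chebyshev concentration bound for the Monte Carlo estimate of the importance-weighted
control update: for i.i.d. pairs `(Sᵢ, δuᵢ)` with `Sᵢ ≥ 0`, `δuᵢ` zero-mean,
square-integrable and independent of `Sᵢ`, with `ωᵢ = exp(−Sᵢ/λ)`, `m = E[ω₁]`,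
`Ê₂ = (1/N)·Σᵢ ωᵢ·δuᵢ/m` and `E₂ = E[ω₁·δu₁]/m`, one has
`ℙ(|Ê₂ − E₂| ≥ ε) ≤ (4·Var[δu₁]/(N·ε²))·exp(2·E[S₁]/λ)`. -/
theorem chebyshev_weighted_update {Ω : Type*} [MeasurableSpace Ω] (μ : Measure Ω)
    [IsProbabilityMeasure μ] (lam : ℝ) (hlam : 0 < lam)
    (N : ℕ) (hN : 0 < N) (S δu : Fin N → Ω → ℝ)
    (hSm : ∀ i, Measurable (S i)) (hδum : ∀ i, Measurable (δu i))
    (hiid_indep : iIndepFun (fun i x => (S i x, δu i x)) μ)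
    (hiid_ident : ∀ i, IdentDistrib (fun x => (S i x, δu i x))
      (fun x => (S ⟨0, hN⟩ x, δu ⟨0, hN⟩ x)) μ μ)
    (hS0 : ∀ i, ∀ᵐ x ∂μ, 0 ≤ S i x) (hSint : ∀ i, Integrable (S i) μ)
    (hindep : ∀ i, IndepFun (S i) (δu i) μ)
    (hδu0 : ∀ i, ∫ x, δu i x ∂μ = 0) (hδu2 : ∀ i, MemLp (δu i) 2 μ)
    (m : ℝ) (hm : m = ∫ x, Real.exp (-S ⟨0, hN⟩ x / lam) ∂μ)
    (E₂ : ℝ) (hE₂ : E₂ = (∫ x, Real.exp (-S ⟨0, hN⟩ x / lam) * δu ⟨0, hN⟩ x ∂μ) / m)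
    (ε : ℝ) (hε : 0 < ε) :
    (μ {x | ε ≤ |(1 / (N : ℝ)) * ∑ i, Real.exp (-S i x / lam) * δu i x / m - E₂|}).toReal ≤
      4 * rvVar μ (δu ⟨0, hN⟩) / ((N : ℝ) * ε ^ 2) *
        Real.exp (2 * (∫ x, S ⟨0, hN⟩ x ∂μ) / lam) := by
  classical
  have hNR : (0:ℝ) < N := by exact_mod_cast hN
  set i0 : Fin N := ⟨0, hN⟩ with hi0
  set A : ℝ := ∫ x, S i0 x ∂μ with hA
  -- weight functions
  have hωm : ∀ i, Measurable fun x => Real.exp (-S i x / lam) :=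
    fun i => ((hSm i).neg.div_const lam).exp
  have hωle : ∀ i, ∀ᵐ x ∂μ, Real.exp (-S i x / lam) ≤ 1 := by
    intro i
    filter_upwards [hS0 i] with x hx
    rw [← Real.exp_zero]
    apply Real.exp_le_exp.2
    exact div_nonpos_iff.mpr (Or.inr ⟨neg_nonpos.mpr hx, hlam.le⟩)
  -- the summands
  set Y : Fin N → Ω → ℝ := fun i x => Real.exp (-S i x / lam) * δu i x with hYdef
  have hYm : ∀ i, Measurable (Y i) := fun i => (hωm i).mul (hδum i)
  have hY2 : ∀ i, MemLp (Y i) 2 μ := by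
    intro i
    refine (hδu2 i).mono (hYm i).aestronglyMeasurable ?_
    filter_upwards [hωle i] with x hx
    simp only [Y, Real.norm_eq_abs, abs_mul, abs_of_pos (Real.exp_pos _)]
    exact mul_le_of_le_one_left (abs_nonneg _) hx
  have hYint : ∀ i, Integrable (Y i) μ := fun i => (hY2 i).integrable one_le_two
  have hωint : ∀ i, Integrable (fun x => Real.exp (-S i x / lam)) μ := by
    intro i
    refine Integrable.mono' (integrable_const 1) (hωm i).aestronglyMeasurable ?_
    filter_upwards [hωle i] with x hx
    rw [Real.norm_eq_abs, abs_of_pos (Real.exp_pos _)]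
    exact hx
  -- each Y i has mean zero
  have hYmean : ∀ i, ∫ x, Y i x ∂μ = 0 := by
    intro i
    have hφ : Measurable fun s : ℝ => Real.exp (-s / lam) :=
      (measurable_id.neg.div_const lam).exp
    have hI : IndepFun (fun x => Real.exp (-S i x / lam)) (δu i) μ :=
      (hindep i).comp hφ measurable_id
    have h := hI.integral_fun_mul_eq_mul_integral (hωint i).1 ((hδu2 i).integrable one_le_two).1
    calc ∫ x, Y i x ∂μ
        = (∫ x, Real.exp (-S i x / lam) ∂μ) * ∫ x, δu i x ∂μ := h
      _ = 0 := by rw [hδu0 i, mul_zero]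
  -- Jensen: exp(-A/lam) ≤ m, hence m > 0
  have hjen : Real.exp (-A / lam) ≤ m := by
    have h1 : Real.exp (∫ x, (-S i0 x / lam) ∂μ) ≤ ∫ x, Real.exp (-S i0 x / lam) ∂μ := by
      refine convexOn_exp.map_integral_le Real.continuous_exp.continuousOn isClosed_univ
        (Filter.Eventually.of_forall fun x => trivial)
        (((hSint i0).neg).div_const lam) ?_
      exact hωint i0
    have h2 : ∫ x, (-S i0 x / lam) ∂μ = -A / lam := by
      rw [integral_div, integral_neg]
    rw [h2] at h1
    rw [hm]
    exact h1
  have hmpos : 0 < m := lt_of_lt_of_le (Real.exp_pos _) hjen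
  -- E₂ = 0
  have hE20 : E₂ = 0 := by
    rw [hE₂, show (∫ x, Real.exp (-S i0 x / lam) * δu i0 x ∂μ) = 0 from hYmean i0, zero_div]
  -- the estimator
  set T : Ω → ℝ := fun x => (1 / ((N:ℝ) * m)) * (∑ i, Y i) x with hTdef
  have hWsum : MemLp (∑ i, Y i) 2 μ := memLp_finset_sum' _ fun i _ => hY2 i
  have hT2 : MemLp T 2 μ := hWsum.const_mul _
  have hTmean : ∫ x, T x ∂μ = 0 := by
    simp only [T]
    rw [integral_const_mul]
    simp only [Finset.sum_apply]
    rw [integral_finset_sum _ fun i _ => hYint i]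
    simp [hYmean]
  -- Chebyshev
  have hcheb := meas_ge_le_variance_div_sq (μ := μ) hT2 hε
  rw [show μ[T] = (0:ℝ) from hTmean] at hcheb
  have hset : {x | ε ≤ |(1 / (N : ℝ)) * ∑ i, Real.exp (-S i x / lam) * δu i x / m - E₂|}
      = {x | ε ≤ |T x - 0|} := by
    ext x
    have hx : (1 / (N : ℝ)) * ∑ i, Real.exp (-S i x / lam) * δu i x / m - E₂ = T x - 0 := by
      rw [hE20, sub_zero, sub_zero]
      simp only [T, Finset.sum_apply, Y]
      rw [← Finset.sum_div]
      field_simp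
    simp only [Set.mem_setOf_eq, hx]
  -- variance of T
  have hφ2 : Measurable fun p : ℝ × ℝ => Real.exp (-p.1 / lam) * p.2 :=
    ((measurable_fst.neg.div_const lam).exp).mul measurable_snd
  have hpair : ∀ i j, i ≠ j → IndepFun (Y i) (Y j) μ := fun i j hij =>
    (hiid_indep.indepFun hij).comp hφ2 hφ2
  have hvarsum : variance (∑ i, Y i) μ = ∑ i : Fin N, variance (Y i) μ :=
    IndepFun.variance_sum (fun i _ => hY2 i) (fun i _ j _ hij => hpair i j hij)
  have hvarident : ∀ i, variance (Y i) μ = variance (Y i0) μ := fun i =>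
    ((hiid_ident i).comp hφ2).variance_eq
  have hsum : ∑ i : Fin N, variance (Y i) μ = (N:ℝ) * variance (Y i0) μ := by
    simp [hvarident, Finset.card_univ]
  have hvarT : variance T μ = (1 / ((N:ℝ) * m))^2 * ((N:ℝ) * variance (Y i0) μ) := by
    rw [show variance T μ = (1 / ((N:ℝ) * m))^2 * variance (∑ i, Y i) μ from
      variance_const_mul _ _ μ, hvarsum, hsum]
  -- bound variance of Y i0
  have hω2int : Integrable (fun x => Real.exp (-S i0 x / lam)^2) μ := by
    refine Integrable.mono' (integrable_const 1) ((hωm i0).pow_const 2).aestronglyMeasurable ?_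
    filter_upwards [hωle i0] with x hx
    rw [Real.norm_eq_abs, abs_of_pos (by positivity)]
    nlinarith [Real.exp_pos (-S i0 x / lam)]
  have hδusq : Integrable (fun x => (δu i0 x)^2) μ := by
    have := (hδu2 i0).integrable_sq
    simpa [sq] using this
  have hsq : ∫ x, (Y i0 x)^2 ∂μ
      = (∫ x, Real.exp (-S i0 x / lam)^2 ∂μ) * ∫ x, (δu i0 x)^2 ∂μ := by
    have hI : IndepFun (fun x => Real.exp (-S i0 x / lam)^2) (fun x => (δu i0 x)^2) μ :=
      (hindep i0).comp (((measurable_id.neg.div_const lam).exp).pow_const 2)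
        (measurable_id.pow_const 2)
    have h := hI.integral_fun_mul_eq_mul_integral hω2int.1 hδusq.1
    calc ∫ x, (Y i0 x)^2 ∂μ
        = ∫ x, Real.exp (-S i0 x / lam)^2 * (δu i0 x)^2 ∂μ := by
          congr 1; funext x; simp [Y, mul_pow]
      _ = _ := h
  have hYvar : variance (Y i0) μ = ∫ x, (Y i0 x)^2 ∂μ := by
    rw [variance_eq_sub (hY2 i0)]
    have : μ[Y i0] = 0 := hYmean i0
    rw [this]
    simp [Pi.pow_apply]
  have hω2le : ∫ x, Real.exp (-S i0 x / lam)^2 ∂μ ≤ 1 := by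
    have h := integral_mono_ae hω2int (integrable_const 1) ?_
    · simpa using h
    · filter_upwards [hωle i0] with x hx
      nlinarith [Real.exp_pos (-S i0 x / lam)]
  have hω2nonneg : 0 ≤ ∫ x, Real.exp (-S i0 x / lam)^2 ∂μ :=
    integral_nonneg fun x => by positivity
  set V : ℝ := rvVar μ (δu i0) with hV
  have hVsq : V = ∫ x, (δu i0 x)^2 ∂μ := by
    rw [hV, rvVar, hδu0 i0]
    ring
  have hVnonneg : 0 ≤ V := by
    rw [hVsq]; exact integral_nonneg fun x => sq_nonneg _
  have hYvarle : variance (Y i0) μ ≤ V := by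
    rw [hYvar, hsq, hVsq]
    calc (∫ x, Real.exp (-S i0 x / lam)^2 ∂μ) * ∫ x, (δu i0 x)^2 ∂μ
        ≤ 1 * ∫ x, (δu i0 x)^2 ∂μ := by
          apply mul_le_mul_of_nonneg_right hω2le
          exact integral_nonneg fun x => sq_nonneg _
      _ = _ := one_mul _
  -- 1/m² ≤ exp(2A/lam)
  have hm2 : (1:ℝ) / m^2 ≤ Real.exp (2 * A / lam) := by
    rw [div_le_iff₀ (by positivity)]
    have hkey : Real.exp (2 * A / lam) * Real.exp (-A / lam)^2 = 1 := by
      rw [sq, ← Real.exp_add, ← Real.exp_add,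
        show 2 * A / lam + (-A / lam + -A / lam) = 0 by ring, Real.exp_zero]
    calc (1:ℝ) = Real.exp (2 * A / lam) * Real.exp (-A / lam)^2 := hkey.symm
      _ ≤ Real.exp (2 * A / lam) * m^2 := by
          apply mul_le_mul_of_nonneg_left _ (Real.exp_pos _).le
          nlinarith [Real.exp_pos (-A / lam)]
  -- put everything together
  calc (μ {x | ε ≤ |(1 / (N : ℝ)) * ∑ i, Real.exp (-S i x / lam) * δu i x / m - E₂|}).toReal
      ≤ (ENNReal.ofReal (variance T μ / ε^2)).toReal := by
        rw [hset]
        exact ENNReal.toReal_mono ENNReal.ofReal_ne_top hcheb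
    _ = variance T μ / ε^2 :=
        ENNReal.toReal_ofReal (div_nonneg (variance_nonneg _ _) (sq_nonneg _))
    _ ≤ 4 * V / ((N:ℝ) * ε^2) * Real.exp (2 * A / lam) := by
        rw [hvarT]
        have heq : (1 / ((N:ℝ) * m))^2 * ((N:ℝ) * variance (Y i0) μ) / ε^2
            = variance (Y i0) μ / ((N:ℝ) * ε^2) * (1 / m^2) := by
          field_simp
        rw [heq]
        calc variance (Y i0) μ / ((N:ℝ) * ε^2) * (1 / m^2)
            ≤ V / ((N:ℝ) * ε^2) * Real.exp (2 * A / lam) := by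
              apply mul_le_mul _ hm2 (by positivity) (by positivity)
              gcongr
          _ ≤ 4 * V / ((N:ℝ) * ε^2) * Real.exp (2 * A / lam) := by
              apply mul_le_mul_of_nonneg_right _ (Real.exp_pos _).le
              have h4 : V ≤ 4 * V := by linarith
              gcongr
end

section
/- Let λ > 0 and let (S₁, δu₁), …, (S_N, δu_N) be independent, identically distributed pairs of real-valued random variables such that almost surely S_i ≥ 0, S_i is integrable, δu_i is independent of S_i, E[δu_i] = 0, and E[(δu_i)²] < ∞. Set ω_i = exp(−S_i/λ), m = E[ω₁], Ê₂ = (1/N)·Σ_{i=1}^{N} ω_i·δu_i/m and E₂ = E[ω₁·δu₁]/m. Fix an error bound ε₂ > 0 and a risk probability ρ₂ ∈ (0,1). If N ≥ 4·Var[δu₁]·exp(2·E[S₁]/λ) / (ρ₂·ε₂²), then ℙ( |Ê₂ − E₂| ≥ ε₂ ) ≤ ρ₂. -/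
open MeasureTheory ProbabilityTheory

/-- Sample-size form of the Chebyshev bound for the importance-weighted MPPI control
update: if `N ≥ 4·Var[δu₁]·exp(2·E[S₁]/λ)/(ρ₂·ε₂²)`, then
`ℙ(|Ê₂ − E₂| ≥ ε₂) ≤ ρ₂`. -/
theorem sample_size_weighted_update {Ω : Type*} [MeasurableSpace Ω] (μ : Measure Ω)
    [IsProbabilityMeasure μ] (lam : ℝ) (hlam : 0 < lam)
    (N : ℕ) (hN : 0 < N) (S δu : Fin N → Ω → ℝ)
    (hSm : ∀ i, Measurable (S i)) (hδum : ∀ i, Measurable (δu i))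
    (hiid_indep : iIndepFun (fun i x => (S i x, δu i x)) μ)
    (hiid_ident : ∀ i, IdentDistrib (fun x => (S i x, δu i x))
      (fun x => (S ⟨0, hN⟩ x, δu ⟨0, hN⟩ x)) μ μ)
    (hS0 : ∀ i, ∀ᵐ x ∂μ, 0 ≤ S i x) (hSint : ∀ i, Integrable (S i) μ)
    (hindep : ∀ i, IndepFun (S i) (δu i) μ)
    (hδu0 : ∀ i, ∫ x, δu i x ∂μ = 0) (hδu2 : ∀ i, MemLp (δu i) 2 μ)
    (m : ℝ) (hm : m = ∫ x, Real.exp (-S ⟨0, hN⟩ x / lam) ∂μ)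
    (E₂ : ℝ) (hE₂ : E₂ = (∫ x, Real.exp (-S ⟨0, hN⟩ x / lam) * δu ⟨0, hN⟩ x ∂μ) / m)
    (ε₂ ρ₂ : ℝ) (hε₂ : 0 < ε₂) (hρ₂ : ρ₂ ∈ Set.Ioo (0 : ℝ) 1)
    (hsize : (N : ℝ) ≥ 4 * rvVar μ (δu ⟨0, hN⟩) *
      Real.exp (2 * (∫ x, S ⟨0, hN⟩ x ∂μ) / lam) / (ρ₂ * ε₂ ^ 2)) :
    (μ {x | ε₂ ≤ |(1 / (N : ℝ)) * ∑ i, Real.exp (-S i x / lam) * δu i x / m - E₂|}).toReal ≤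
      ρ₂ := by
  obtain ⟨hρ0, hρ1⟩ := hρ₂
  set i0 : Fin N := ⟨0, hN⟩ with hi0
  set V : ℝ := ∫ x, (δu i0 x) ^ 2 ∂μ with hV
  have hVnn : 0 ≤ V := integral_nonneg fun x => sq_nonneg _
  have hrvVar : rvVar μ (δu i0) = V := by
    rw [rvVar, hδu0 i0]; ring
  set Es : ℝ := ∫ x, S i0 x ∂μ with hEs
  set e : ℝ := Real.exp (2 * Es / lam) with he
  have he_pos : 0 < e := Real.exp_pos _
  have hNpos : (0:ℝ) < N := by exact_mod_cast hN
  -- measurability and bounds on ω i x = exp (-S i x / lam)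
  have hωm : ∀ i, Measurable fun x => Real.exp (-S i x / lam) := fun i =>
    Real.measurable_exp.comp ((hSm i).neg.div_const lam)
  have hωle : ∀ i, ∀ᵐ x ∂μ, Real.exp (-S i x / lam) ≤ 1 := fun i =>
    (hS0 i).mono fun x hx => by
      rw [Real.exp_le_one_iff]
      exact div_nonpos_of_nonpos_of_nonneg (neg_nonpos_of_nonneg hx) hlam.le
  have hωint : ∀ i, Integrable (fun x => Real.exp (-S i x / lam)) μ := fun i =>
    Integrable.mono' (integrable_const 1) (hωm i).aestronglyMeasurable
      ((hωle i).mono fun x hx => by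
        rw [Real.norm_eq_abs, abs_of_pos (Real.exp_pos _)]; exact hx)
  -- the summands Y i
  set Yf : Fin N → Ω → ℝ := fun i x => Real.exp (-S i x / lam) * δu i x with hYf
  have hYm : ∀ i, Measurable (Yf i) := fun i => (hωm i).mul (hδum i)
  have hY2 : ∀ i, MemLp (Yf i) 2 μ := fun i =>
    (hδu2 i).of_le (hYm i).aestronglyMeasurable
      ((hωle i).mono fun x hx => by
        simp only [hYf, Real.norm_eq_abs, abs_mul, abs_of_pos (Real.exp_pos _)]
        exact mul_le_of_le_one_left (abs_nonneg _) hx)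
  have hYint : ∀ i, Integrable (Yf i) μ := fun i => (hY2 i).integrable one_le_two
  -- independence of ω i and δu i, and zero mean of Y i
  have hωδind : ∀ i, IndepFun (fun x => Real.exp (-S i x / lam)) (δu i) μ := fun i =>
    (hindep i).comp (Real.measurable_exp.comp (measurable_id.neg.div_const lam)) measurable_id
  have hEY : ∀ i, ∫ x, Yf i x ∂μ = 0 := fun i => by
    have h := (hωδind i).integral_mul_eq_mul_integral (hωint i).aestronglyMeasurable
      ((hδu2 i).integrable one_le_two).aestronglyMeasurable
    simpa [hYf, hδu0 i] using h
  -- identical distribution of the Y i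
  have hg : Measurable fun p : ℝ × ℝ => Real.exp (-p.1 / lam) * p.2 :=
    (Real.measurable_exp.comp (measurable_fst.neg.div_const lam)).mul measurable_snd
  have hYid : ∀ i, IdentDistrib (Yf i) (Yf i0) μ μ := fun i => (hiid_ident i).comp hg
  -- independence of the Y i
  have hYiid : iIndepFun Yf μ := by
    have := hiid_indep.comp (fun _ => fun p : ℝ × ℝ => Real.exp (-p.1 / lam) * p.2)
      (fun _ => hg)
    exact this
  -- variance of the sum
  have hT2 : MemLp (∑ i, Yf i) 2 μ := memLp_finset_sum' _ fun i _ => hY2 i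
  have hTmean : ∫ x, (∑ i, Yf i) x ∂μ = 0 := by
    simp only [Finset.sum_apply]
    rw [integral_finset_sum _ fun i _ => hYint i]
    simp [hEY]
  set v0 : ℝ := variance (Yf i0) μ with hv0def
  have hv0nn : 0 ≤ v0 := variance_nonneg _ _
  have hTvar : variance (∑ i, Yf i) μ = N * v0 := by
    rw [IndepFun.variance_sum (fun i _ => hY2 i)
      (fun i _ j _ hij => hYiid.indepFun hij)]
    simp [(hYid _).variance_eq, ← hv0def, Finset.card_univ, mul_comm]
  -- v0 ≤ V
  have hω2int : Integrable (fun x => Real.exp (-S i0 x / lam) ^ 2) μ :=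
    Integrable.mono' (integrable_const 1) ((hωm i0).pow_const 2).aestronglyMeasurable
      ((hωle i0).mono fun x hx => by
        rw [Real.norm_eq_abs, abs_of_pos (pow_pos (Real.exp_pos _) 2)]
        exact pow_le_one₀ (Real.exp_pos _).le hx)
  have hω2le : ∫ x, Real.exp (-S i0 x / lam) ^ 2 ∂μ ≤ 1 := by
    calc ∫ x, Real.exp (-S i0 x / lam) ^ 2 ∂μ ≤ ∫ _x, (1:ℝ) ∂μ :=
          integral_mono_ae hω2int (integrable_const 1)
            ((hωle i0).mono fun x hx => pow_le_one₀ (Real.exp_pos _).le hx)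
      _ = 1 := by simp
  have hω2nn : 0 ≤ ∫ x, Real.exp (-S i0 x / lam) ^ 2 ∂μ :=
    integral_nonneg fun x => sq_nonneg _
  have hv0 : v0 = (∫ x, Real.exp (-S i0 x / lam) ^ 2 ∂μ) * V := by
    have hsq : ∀ x, Yf i0 x ^ 2 = Real.exp (-S i0 x / lam) ^ 2 * δu i0 x ^ 2 := fun x => by
      simp [hYf]; ring
    have hind2 : IndepFun (fun x => Real.exp (-S i0 x / lam) ^ 2) (fun x => δu i0 x ^ 2) μ :=
      (hindep i0).comp ((Real.measurable_exp.comp (measurable_id.neg.div_const lam)).pow_const 2)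
        (measurable_id.pow_const 2)
    have h := hind2.integral_mul_eq_mul_integral hω2int.aestronglyMeasurable (hδu2 i0).integrable_sq.aestronglyMeasurable
    rw [hv0def, variance_eq_sub (hY2 i0)]
    have : (∫ x, Yf i0 x ∂μ) = 0 := hEY i0
    simp only [Pi.pow_apply]
    rw [this]
    have h2 : ∫ x, Yf i0 x ^ 2 ∂μ =
        (∫ x, Real.exp (-S i0 x / lam) ^ 2 ∂μ) * ∫ x, δu i0 x ^ 2 ∂μ := by
      rw [show (fun x => Yf i0 x ^ 2) = fun x =>
        Real.exp (-S i0 x / lam) ^ 2 * δu i0 x ^ 2 from funext hsq]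
      simpa using h
    rw [h2, hV]; ring
  have hv0le : v0 ≤ V := by
    rw [hv0]
    exact mul_le_of_le_one_left hVnn hω2le
  -- Jensen: exp (-Es/lam) ≤ m, so m > 0 and 1/m² ≤ e
  have hm_ge : Real.exp (-Es / lam) ≤ m := by
    have hfi : Integrable (fun x => -S i0 x / lam) μ := ((hSint i0).neg).div_const lam
    have hintf : (∫ x, -S i0 x / lam ∂μ) = -Es / lam := by
      rw [integral_div, integral_neg]
    have hJ := convexOn_exp.map_integral_le (μ := μ) Real.continuous_exp.continuousOn
      isClosed_univ (Filter.Eventually.of_forall fun x => Set.mem_univ _) hfi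
      (by exact hωint i0)
    rw [hintf] at hJ
    rw [hm]
    simpa [Function.comp] using hJ
  have hm_pos : 0 < m := lt_of_lt_of_le (Real.exp_pos _) hm_ge
  have hminv : Real.exp (-(2 * Es) / lam) ≤ m ^ 2 := by
    calc Real.exp (-(2 * Es) / lam) = Real.exp (-Es / lam) ^ 2 := by
          rw [← Real.exp_nat_mul]; ring_nf
      _ ≤ m ^ 2 := by
          exact pow_le_pow_left₀ (Real.exp_pos _).le hm_ge 2
  have hem : e * Real.exp (-(2 * Es) / lam) = 1 := by
    rw [he, ← Real.exp_add]
    rw [show 2 * Es / lam + -(2 * Es) / lam = 0 by ring, Real.exp_zero]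
  -- E₂ = 0
  have hE₂0 : E₂ = 0 := by
    have h0 : (∫ x, Real.exp (-S i0 x / lam) * δu i0 x ∂μ) = 0 := hEY i0
    rw [hE₂, h0, zero_div]
  -- Chebyshev
  set c : ℝ := (N : ℝ) * m * ε₂ with hc
  have hcpos : 0 < c := by positivity
  have hcheb := meas_ge_le_variance_div_sq (μ := μ) hT2 hcpos
  have hTmean' : ∫ x, ∑ i, Yf i x ∂μ = 0 := by
    simpa [Finset.sum_apply] using hTmean
  have hset : {x | ε₂ ≤ |(1 / (N : ℝ)) * ∑ i, Real.exp (-S i x / lam) * δu i x / m - E₂|}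
      = {x | c ≤ |(∑ i, Yf i) x - ∫ x, (∑ i, Yf i) x ∂μ|} := by
    ext x
    simp only [Set.mem_setOf_eq, Finset.sum_apply, hTmean', hE₂0, sub_zero]
    have hsum : ∑ i, Real.exp (-S i x / lam) * δu i x / m = (∑ i, Yf i x) / m :=
      (Finset.sum_div _ _ _).symm
    rw [hsum]
    rw [show (1 / (N : ℝ)) * ((∑ i, Yf i x) / m) = (∑ i, Yf i x) / ((N : ℝ) * m) by
      field_simp]
    rw [abs_div, abs_of_pos (by positivity : (0:ℝ) < (N : ℝ) * m)]
    rw [le_div_iff₀ (by positivity)]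
    constructor
    · intro h; rw [hc]; linarith [h]
    · intro h; rw [hc] at h; linarith [h]
  rw [hset]
  have hμ : μ {x | c ≤ |(∑ i, Yf i) x - ∫ x, (∑ i, Yf i) x ∂μ|} ≤
      ENNReal.ofReal (variance (∑ i, Yf i) μ / c ^ 2) := by
    simpa using hcheb
  calc (μ {x | c ≤ |(∑ i, Yf i) x - ∫ x, (∑ i, Yf i) x ∂μ|}).toReal
      ≤ (ENNReal.ofReal (variance (∑ i, Yf i) μ / c ^ 2)).toReal :=
        ENNReal.toReal_mono ENNReal.ofReal_ne_top hμ
    _ = variance (∑ i, Yf i) μ / c ^ 2 :=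
        ENNReal.toReal_ofReal (div_nonneg (variance_nonneg _ _) (sq_nonneg _))
    _ ≤ ρ₂ := by
        rw [hTvar, div_le_iff₀ (by positivity)]
        have h4 : 4 * V * e ≤ (N : ℝ) * (ρ₂ * ε₂ ^ 2) := by
          rw [hrvVar] at hsize
          rw [ge_iff_le, div_le_iff₀ (by positivity)] at hsize
          linarith [hsize]
        have hEpos : (0:ℝ) < Real.exp (-(2 * Es) / lam) := Real.exp_pos _
        calc (N : ℝ) * v0 ≤ (N : ℝ) * V := mul_le_mul_of_nonneg_left hv0le hNpos.le
          _ = (N : ℝ) * (4 * V * e) * Real.exp (-(2 * Es) / lam) / 4 := by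
              rw [show (N : ℝ) * (4 * V * e) * Real.exp (-(2 * Es) / lam) / 4
                = (N : ℝ) * V * (e * Real.exp (-(2 * Es) / lam)) by ring, hem, mul_one]
          _ ≤ (N : ℝ) * ((N : ℝ) * (ρ₂ * ε₂ ^ 2)) * Real.exp (-(2 * Es) / lam) / 4 := by
              gcongr
          _ ≤ (N : ℝ) * ((N : ℝ) * (ρ₂ * ε₂ ^ 2)) * m ^ 2 / 4 := by
              have hnn : (0:ℝ) ≤ (N : ℝ) * ((N : ℝ) * (ρ₂ * ε₂ ^ 2)) := by positivity
              have := mul_le_mul_of_nonneg_left hminv hnn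
              linarith
          _ = ρ₂ * c ^ 2 / 4 := by rw [hc]; ring
          _ ≤ ρ₂ * c ^ 2 := by
              have h5 : 0 ≤ ρ₂ * c ^ 2 := by positivity
              linarith
end
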